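/- Let A ∈ ℝ^{n×n} and B ∈ ℝ^{n×1} with the controllability matrix P_n = [B, AB, ..., A^{n−1}B] invertible. Define w_1 = e_n^T P_n^{−1} (the last row of P_n^{−1}) and W_c = [w_1; w_1 A; ...; w_1 A^{n−1}]^{−1}. Then W_c^{−1} A W_c = A_c and W_c^{−1} B = e_n, where A_c is the companion matrix (controllable canonical form) of the characteristic polynomial of A (superdiagonal ones, last row the negated reversed coefficients) and e_n = (0,...,0,1)^T. -/

import Mathlib

open Matrix Finset

/-- The companion matrix in controllable canonical form of
`s^n + a_1 s^{n-1} + ⋯ + a_n`, where `a k` (0-based) denotes `a_{k+1}`. -/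
def companion {R : Type*} [CommRing R] (n : ℕ) (a : Fin n → R) :
    Matrix (Fin n) (Fin n) R :=
  Matrix.of fun i j =>
    if (i : ℕ) + 1 = (j : ℕ) then 1
    else if (i : ℕ) = n - 1 then -a (Fin.rev j)
    else 0

/-- Transformation of a controllable single-input pair `(A, B)` to controllable
canonical form: with `w₁` the last row of the inverse controllability matrix and
`W_c = [w₁; w₁A; …; w₁A^{n-1}]⁻¹`, one has `W_c⁻¹ A W_c = A_c` (the companion form
of the characteristic polynomial of `A`) and `W_c⁻¹ B = e_n`. -/
theorem controllable_canonical_form (m : ℕ)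
    (A : Matrix (Fin (m + 1)) (Fin (m + 1)) ℝ) (B : Fin (m + 1) → ℝ)
    (hctrb : IsUnit (Matrix.of fun i j : Fin (m + 1) => (A ^ (j : ℕ)).mulVec B i)) :
    ((Matrix.of fun i j : Fin (m + 1) =>
        Matrix.vecMul
          (fun k => (Matrix.of fun i j : Fin (m + 1) => (A ^ (j : ℕ)).mulVec B i)⁻¹
            (Fin.last m) k)
          (A ^ (i : ℕ)) j)⁻¹)⁻¹ * A *
      (Matrix.of fun i j : Fin (m + 1) =>
        Matrix.vecMul
          (fun k => (Matrix.of fun i j : Fin (m + 1) => (A ^ (j : ℕ)).mulVec B i)⁻¹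
            (Fin.last m) k)
          (A ^ (i : ℕ)) j)⁻¹
      = companion (m + 1) (fun k => A.charpoly.coeff (m - (k : ℕ))) ∧
    (((Matrix.of fun i j : Fin (m + 1) =>
        Matrix.vecMul
          (fun k => (Matrix.of fun i j : Fin (m + 1) => (A ^ (j : ℕ)).mulVec B i)⁻¹
            (Fin.last m) k)
          (A ^ (i : ℕ)) j)⁻¹)⁻¹).mulVec B
      = Pi.single (Fin.last m) 1 := by
  set P : Matrix (Fin (m+1)) (Fin (m+1)) ℝ :=
      Matrix.of fun i j : Fin (m + 1) => (A ^ (j : ℕ)).mulVec B i with hP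
  set w : Fin (m+1) → ℝ := fun k => P⁻¹ (Fin.last m) k with hw
  set W : Matrix (Fin (m+1)) (Fin (m+1)) ℝ :=
      Matrix.of fun i j : Fin (m+1) => Matrix.vecMul w (A ^ (i : ℕ)) j with hW
  have hPdet : IsUnit P.det := (Matrix.isUnit_iff_isUnit_det P).mp hctrb
  -- key controllability identity: w A^j B = δ_{j,m}
  have hkey : ∀ j : Fin (m+1), Matrix.vecMul w (A ^ (j:ℕ)) ⬝ᵥ B = if (j:ℕ) = m then 1 else 0 := by
    intro j
    have h1 : (P⁻¹ * P) (Fin.last m) j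
        = (1 : Matrix (Fin (m+1)) (Fin (m+1)) ℝ) (Fin.last m) j := by
      rw [Matrix.nonsing_inv_mul P hPdet]
    have h2 : (P⁻¹ * P) (Fin.last m) j = w ⬝ᵥ (A ^ (j:ℕ)).mulVec B := by
      simp [Matrix.mul_apply, dotProduct, hP, hw]
    rw [← dotProduct_mulVec, ← h2, h1]
    simp [Matrix.one_apply, Fin.ext_iff, Fin.val_last, eq_comm]
  have hkeyn : ∀ j : ℕ, j ≤ m → Matrix.vecMul w (A ^ j) ⬝ᵥ B = if j = m then 1 else 0 := by
    intro j hj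
    simpa using hkey ⟨j, Nat.lt_succ_of_le hj⟩
  -- W * P is anti-triangular with unit antidiagonal, hence W is invertible
  have hWP : ∀ i j : Fin (m+1), (W * P) i j
      = Matrix.vecMul w (A ^ ((i:ℕ)+(j:ℕ))) ⬝ᵥ B := by
    intro i j
    have h3 : (W * P) i j = (Matrix.vecMul w (A ^ (i:ℕ))) ⬝ᵥ (A ^ (j:ℕ)).mulVec B := by
      simp [Matrix.mul_apply, dotProduct, hW, hP]
    rw [h3, dotProduct_mulVec, Matrix.vecMul_vecMul, ← pow_add]
  have hWdet : IsUnit W.det := by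
    have htri : ((W * P).submatrix Fin.revPerm id).BlockTriangular id := by
      intro i j hij
      have hlt : (Fin.rev i : ℕ) + (j : ℕ) < m := by
        have h1 : (Fin.rev i : ℕ) = m - (i : ℕ) := by simp [Fin.val_rev]
        have := i.isLt; have := j.isLt
        simp only [id] at hij
        omega
      rw [Matrix.submatrix_apply, id, Fin.revPerm_apply, hWP, hkeyn _ hlt.le,
        if_neg (Nat.ne_of_lt hlt)]
    have hdiag : ∀ i, ((W * P).submatrix Fin.revPerm id) i i = 1 := by
      intro i
      have h1 : (Fin.rev i : ℕ) + (i : ℕ) = m := by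
        have h1 : (Fin.rev i : ℕ) = m - (i : ℕ) := by simp [Fin.val_rev]
        have := i.isLt; omega
      rw [Matrix.submatrix_apply, id, Fin.revPerm_apply, hWP, h1, hkeyn _ le_rfl, if_pos rfl]
    have h3 : (↑↑(Equiv.Perm.sign (Fin.revPerm : Equiv.Perm (Fin (m+1)))) : ℝ) * (W * P).det
        = 1 := by
      rw [← Matrix.det_permute, Matrix.det_of_upperTriangular htri]
      exact Finset.prod_eq_one fun i _ => hdiag i
    have h4 : IsUnit (W * P).det := IsUnit.of_mul_eq_one _ (by rw [mul_comm]; exact h3)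
    rw [Matrix.det_mul] at h4
    exact isUnit_of_mul_isUnit_left h4
  -- Cayley–Hamilton
  have hCH : A ^ (m+1) = ∑ t ∈ Finset.range (m+1), (-(A.charpoly.coeff t)) • A ^ t := by
    have hdeg : A.charpoly.natDegree = m + 1 := by simpa using A.charpoly_natDegree_eq_dim
    have h0 := A.aeval_self_charpoly
    rw [Polynomial.aeval_eq_sum_range, hdeg, Finset.sum_range_succ] at h0
    have hc : A.charpoly.coeff (m+1) = 1 := by
      have h := A.charpoly_monic.coeff_natDegree
      rwa [hdeg] at h
    rw [hc, one_smul] at h0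
    rw [show (∑ t ∈ Finset.range (m+1), (-(A.charpoly.coeff t)) • A ^ t)
        = -∑ t ∈ Finset.range (m+1), A.charpoly.coeff t • A ^ t by simp]
    exact eq_neg_of_add_eq_zero_right h0
  -- main intertwining identity
  have hmain : W * A = companion (m + 1) (fun k => A.charpoly.coeff (m - (k : ℕ))) * W := by
    ext i j
    have hL : (W * A) i j = Matrix.vecMul w (A ^ ((i:ℕ)+1)) j := by
      rw [pow_succ, ← Matrix.vecMul_vecMul]
      simp [Matrix.mul_apply, Matrix.vecMul, dotProduct, hW]
    rw [hL, Matrix.mul_apply]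
    by_cases hi : (i:ℕ) = m
    · have hC : ∀ k : Fin (m+1),
          companion (m + 1) (fun k => A.charpoly.coeff (m - (k : ℕ))) i k
            = -(A.charpoly.coeff k) := by
        intro k
        have hk := k.isLt
        simp only [companion, Matrix.of_apply]
        rw [if_neg (by omega), if_pos (by omega)]
        congr 2
        simp [Fin.val_rev]
        omega
      have hR : ∑ k, companion (m + 1) (fun k => A.charpoly.coeff (m - (k : ℕ))) i k * W k j
          = ∑ t ∈ Finset.range (m+1), (-(A.charpoly.coeff t)) * Matrix.vecMul w (A ^ t) j := by
        rw [← Fin.sum_univ_eq_sum_range]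
        exact Finset.sum_congr rfl fun k _ => by rw [hC k, hW]; rfl
      rw [hR, show (i:ℕ)+1 = m+1 from by omega, hCH]
      simp only [Matrix.vecMul, dotProduct, Matrix.sum_apply, Matrix.smul_apply,
        smul_eq_mul, Finset.mul_sum]
      rw [Finset.sum_comm]
      exact Finset.sum_congr rfl fun t _ => Finset.sum_congr rfl fun l _ => by ring
    · have him : (i:ℕ) < m := lt_of_le_of_ne (Fin.is_le i) hi
      rw [Finset.sum_eq_single (⟨(i:ℕ)+1, by omega⟩ : Fin (m+1))]
      · have : companion (m + 1) (fun k => A.charpoly.coeff (m - (k : ℕ))) i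
            ⟨(i:ℕ)+1, by omega⟩ = 1 := by
          simp [companion]
        rw [this, one_mul, hW]
        rfl
      · intro b _ hb
        have hb' : (i:ℕ) + 1 ≠ (b:ℕ) := fun h => hb (Fin.ext h.symm)
        simp [companion, hb', hi]
      · intro h; exact absurd (Finset.mem_univ _) h
  have hinv : W⁻¹⁻¹ = W := Matrix.nonsing_inv_nonsing_inv W hWdet
  constructor
  · rw [hinv]
    have : Invertible W := W.invertibleOfIsUnitDet hWdet
    rw [Matrix.mul_inv_eq_iff_eq_mul_of_invertible]
    exact hmain
  · rw [hinv]
    ext i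
    have h5 : W.mulVec B i = Matrix.vecMul w (A ^ (i:ℕ)) ⬝ᵥ B := by
      simp [Matrix.mulVec, dotProduct, hW]
    rw [h5, hkey i, Pi.single_apply]
    simp [Fin.ext_iff, Fin.val_last, eq_comm]
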